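/- If Re(γ + 1 - α - β) > 0 and γ is not a nonpositive integer, then Σ_{n=0}^∞ (α/2)_n (β/2)_n / (n! ((γ+1)/2)_n) = Γ((γ+1-α-β)/2) Γ((γ+1)/2) / (Γ((γ+1-α)/2) Γ((γ+1-β)/2)). -/

import Mathlib

open Finset Nat Filter Topology

noncomputable def gterm (a b c : ℂ) (n : ℕ) : ℂ :=
  (∏ i ∈ Finset.range n, (a + (i : ℂ))) * (∏ i ∈ Finset.range n, (b + (i : ℂ))) /
    ((n ! : ℂ) * ∏ i ∈ Finset.range n, (c + (i : ℂ)))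

lemma gterm_zero (a b c : ℂ) : gterm a b c 0 = 1 := by simp [gterm]

lemma gterm_succ (a b c : ℂ) (n : ℕ) :
    gterm a b c (n + 1) = gterm a b c n * ((a + n) * (b + n) / (((n : ℂ) + 1) * (c + n))) := by
  unfold gterm
  rw [show ((∏ i ∈ Finset.range n, (a + (i : ℂ))) * (∏ i ∈ Finset.range n, (b + (i : ℂ))) /
    ((n ! : ℂ) * ∏ i ∈ Finset.range n, (c + (i : ℂ))) * ((a + n) * (b + n) / (((n : ℂ) + 1) * (c + n))))
    = ((∏ i ∈ Finset.range n, (a + (i : ℂ))) * (∏ i ∈ Finset.range n, (b + (i : ℂ))) * ((a + n) * (b + n)) /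
    (((n ! : ℂ) * ∏ i ∈ Finset.range n, (c + (i : ℂ))) * (((n : ℂ) + 1) * (c + n)))) from
    div_mul_div_comm _ _ _ _]
  rw [Finset.prod_range_succ, Finset.prod_range_succ, Finset.prod_range_succ]
  congr 1
  · ring
  · push_cast [Nat.factorial_succ]; ring

lemma norm_gterm_succ (a b c : ℂ) (n : ℕ) :
    ‖gterm a b c (n + 1)‖
      = ‖gterm a b c n‖ * (‖a + (n:ℂ)‖ * ‖b + (n:ℂ)‖ / (((n : ℝ) + 1) * ‖c + (n:ℂ)‖)) := by
  have h1 : ‖(n:ℂ) + 1‖ = (n:ℝ) + 1 := by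
    rw [show ((n:ℂ) + 1) = ((n + 1 : ℕ) : ℂ) by push_cast; ring, Complex.norm_natCast]
    push_cast; ring
  rw [gterm_succ, norm_mul, norm_div, norm_mul, norm_mul, h1]

/-- L1 -/
lemma tendsto_norm_add_sub (z : ℂ) :
    Tendsto (fun n : ℕ => ‖z + (n:ℂ)‖ - n) atTop (𝓝 z.re) := by
  have hbase : Tendsto (fun n : ℕ => (n:ℝ) + z.re) atTop atTop :=
    tendsto_atTop_add_const_right _ z.re tendsto_natCast_atTop_atTop
  have hden : Tendsto (fun n : ℕ => ‖z + (n:ℂ)‖ + ((n:ℝ) + z.re)) atTop atTop := by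
    refine tendsto_atTop_mono (fun n => ?_) hbase
    have := norm_nonneg (z + (n:ℂ))
    linarith
  have h0 : Tendsto (fun n : ℕ => z.im ^ 2 / (‖z + (n:ℂ)‖ + ((n:ℝ) + z.re))) atTop (𝓝 0) :=
    Tendsto.div_atTop tendsto_const_nhds hden
  have key : ∀ᶠ n : ℕ in atTop,
      z.re + z.im ^ 2 / (‖z + (n:ℂ)‖ + ((n:ℝ) + z.re)) = ‖z + (n:ℂ)‖ - n := by
    filter_upwards [eventually_gt_atTop (Nat.ceil |z.re|)] with n hn
    have hpos : 0 < (n : ℝ) + z.re := by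
      have : |z.re| < n := by
        calc |z.re| ≤ Nat.ceil |z.re| := Nat.le_ceil _
        _ < n := by exact_mod_cast hn
      have := abs_lt.mp this
      linarith
    have hD : 0 < ‖z + (n:ℂ)‖ + ((n:ℝ) + z.re) := by positivity
    have hsq : ‖z + (n:ℂ)‖ ^ 2 = ((n:ℝ) + z.re) ^ 2 + z.im ^ 2 := by
      rw [Complex.sq_norm, Complex.normSq_apply]
      simp only [Complex.add_re, Complex.add_im, Complex.natCast_re, Complex.natCast_im]
      ring
    field_simp
    linear_combination (-1 : ℝ) * hsq
  refine Tendsto.congr' key ?_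
  simpa using tendsto_const_nhds.add h0

/-- L2 -/
lemma tendsto_nat_mul_rpow_sub (p : ℝ) :
    Tendsto (fun n : ℕ => (n : ℝ) * ((1 + 1 / (n:ℝ)) ^ p - 1)) atTop (𝓝 p) := by
  have hd : HasDerivAt (fun x : ℝ => x ^ p) p 1 := by
    simpa using Real.hasDerivAt_rpow_const (x := 1) (p := p) (Or.inl one_ne_zero)
  have hslope := hasDerivAt_iff_tendsto_slope.mp hd
  have hseq : Tendsto (fun n : ℕ => 1 + 1 / (n:ℝ)) atTop (𝓝[≠] 1) := by
    apply tendsto_nhdsWithin_of_tendsto_nhds_of_eventually_within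
    · simpa using tendsto_const_nhds.add (tendsto_one_div_atTop_nhds_zero_nat (𝕜 := ℝ))
    · filter_upwards [eventually_gt_atTop 0] with n hn
      have : 0 < 1 / (n:ℝ) := by positivity
      simp only [Set.mem_compl_iff, Set.mem_singleton_iff]
      intro hcon
      nlinarith [hcon]
  have := hslope.comp hseq
  refine Tendsto.congr' ?_ this
  filter_upwards [eventually_gt_atTop 0] with n hn
  have hn' : (0:ℝ) < n := by exact_mod_cast hn
  simp only [Function.comp_apply, slope_def_field]
  rw [Real.one_rpow]
  field_simp
  ring

lemma ratio_event (a b c : ℂ) (p : ℝ) (hp : p < 1 + (c - a - b).re) :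
    ∀ᶠ n : ℕ in atTop,
      ‖a + (n:ℂ)‖ * ‖b + (n:ℂ)‖ * ((n:ℝ) + 1) ^ p ≤ ‖c + (n:ℂ)‖ * ((n:ℝ) + 1) * (n:ℝ) ^ p := by
  set A : ℕ → ℝ := fun n => ‖a + (n:ℂ)‖ - n with hA
  set B : ℕ → ℝ := fun n => ‖b + (n:ℂ)‖ - n with hB
  set Cc : ℕ → ℝ := fun n => ‖c + (n:ℂ)‖ - n with hC
  set ρ : ℕ → ℝ := fun n => (1 + 1 / (n:ℝ)) ^ p with hρ
  set g : ℕ → ℝ := fun n =>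
    Cc n + Cc n * (1 / n) + 1 - ρ n * ((A n * B n) * (1 / n)) - ρ n * A n - ρ n * B n
      - (n:ℝ) * (ρ n - 1) with hg
  have hρlim : Tendsto ρ atTop (𝓝 1) := by
    have hcont : ContinuousAt (fun x : ℝ => x ^ p) 1 :=
      Real.continuousAt_rpow_const 1 p (Or.inl one_ne_zero)
    have hseq : Tendsto (fun n : ℕ => 1 + 1 / (n:ℝ)) atTop (𝓝 1) := by
      simpa using tendsto_const_nhds.add (tendsto_one_div_atTop_nhds_zero_nat (𝕜 := ℝ))
    simpa [hρ, Real.one_rpow, Function.comp_def] using hcont.tendsto.comp hseq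
  have hinv : Tendsto (fun n : ℕ => 1 / (n:ℝ)) atTop (𝓝 0) := tendsto_one_div_atTop_nhds_zero_nat
  have hglim : Tendsto g atTop (𝓝 (c.re + 1 - a.re - b.re - p)) := by
    have h1 := tendsto_norm_add_sub a
    have h2 := tendsto_norm_add_sub b
    have h3 := tendsto_norm_add_sub c
    have h4 := tendsto_nat_mul_rpow_sub p
    have : Tendsto g atTop
        (𝓝 (c.re + c.re * 0 + 1 - 1 * ((a.re * b.re) * 0) - 1 * a.re - 1 * b.re - p)) := by
      exact ((((((h3.add (h3.mul hinv)).add tendsto_const_nhds).sub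
        (hρlim.mul ((h1.mul h2).mul hinv))).sub (hρlim.mul h1)).sub (hρlim.mul h2)).sub h4)
    simpa using this
  have hpos : 0 < c.re + 1 - a.re - b.re - p := by
    simp only [Complex.sub_re] at hp; linarith
  have hev : ∀ᶠ n : ℕ in atTop, 0 < g n := hglim.eventually (eventually_gt_nhds hpos)
  filter_upwards [hev, eventually_ge_atTop 1] with n hgn hn1
  have hn0 : (0:ℝ) < n := by exact_mod_cast hn1
  have hρn : ρ n * (n:ℝ) ^ p = ((n:ℝ) + 1) ^ p := by
    rw [hρ, ← Real.mul_rpow (by positivity) hn0.le]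
    congr 1
    field_simp
  have hid : (n:ℝ) * g n = ‖c + (n:ℂ)‖ * ((n:ℝ) + 1) - ‖a + (n:ℂ)‖ * ‖b + (n:ℂ)‖ * ρ n := by
    rw [hg]
    simp only [hA, hB, hC]
    field_simp
    ring
  have hmain : ‖a + (n:ℂ)‖ * ‖b + (n:ℂ)‖ * ρ n ≤ ‖c + (n:ℂ)‖ * ((n:ℝ) + 1) := by
    nlinarith [mul_pos hn0 hgn]
  calc ‖a + (n:ℂ)‖ * ‖b + (n:ℂ)‖ * ((n:ℝ) + 1) ^ p
      = (‖a + (n:ℂ)‖ * ‖b + (n:ℂ)‖ * ρ n) * (n:ℝ) ^ p := by rw [← hρn]; ring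
    _ ≤ (‖c + (n:ℂ)‖ * ((n:ℝ) + 1)) * (n:ℝ) ^ p := by
        apply mul_le_mul_of_nonneg_right hmain (by positivity)
    _ = ‖c + (n:ℂ)‖ * ((n:ℝ) + 1) * (n:ℝ) ^ p := by ring

lemma gterm_bound (a b c : ℂ) (p : ℝ) (hc : ∀ j : ℕ, c + (j:ℂ) ≠ 0)
    (hp : p < 1 + (c - a - b).re) :
    ∃ C : ℝ, ∀ n : ℕ, 1 ≤ n → ‖gterm a b c n‖ ≤ C * ((n:ℝ) ^ p)⁻¹ := by
  obtain ⟨N, hN⟩ := (ratio_event a b c p hp).exists_forall_of_atTop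
  set N' := max N 1 with hN'
  have hdec : ∀ n : ℕ, N' ≤ n → ‖gterm a b c n‖ * (n:ℝ) ^ p ≤ ‖gterm a b c N'‖ * (N':ℝ) ^ p := by
    intro n hn
    induction n, hn using Nat.le_induction with
    | base => exact le_refl _
    | succ n hn ih =>
      refine le_trans ?_ ih
      have hn1 : 1 ≤ n := le_trans (le_max_right N 1) hn
      have hn0 : (0:ℝ) < n := by exact_mod_cast hn1
      have hcn : ‖c + (n:ℂ)‖ ≠ 0 := norm_ne_zero_iff.mpr (hc n)
      have hcn' : 0 < ‖c + (n:ℂ)‖ := norm_pos_iff.mpr (hc n)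
      have hr := hN n (le_trans (le_max_left N 1) hn)
      rw [norm_gterm_succ]
      push_cast
      calc ‖gterm a b c n‖ * (‖a + (n:ℂ)‖ * ‖b + (n:ℂ)‖ / (((n : ℝ) + 1) * ‖c + (n:ℂ)‖))
            * ((n:ℝ) + 1) ^ p
          = ‖gterm a b c n‖ *
            ((‖a + (n:ℂ)‖ * ‖b + (n:ℂ)‖ * ((n:ℝ) + 1) ^ p) / (((n : ℝ) + 1) * ‖c + (n:ℂ)‖)) := by
            ring
        _ ≤ ‖gterm a b c n‖ *
            ((‖c + (n:ℂ)‖ * ((n:ℝ) + 1) * (n:ℝ) ^ p) / (((n : ℝ) + 1) * ‖c + (n:ℂ)‖)) := by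
            gcongr
        _ = ‖gterm a b c n‖ * (n:ℝ) ^ p := by
            congr 1
            rw [mul_comm (((n:ℝ) + 1)) (‖c + (n:ℂ)‖)]
            exact mul_div_cancel_left₀ _ (by positivity)
  refine ⟨∑ k ∈ Finset.range (N' + 1), ‖gterm a b c k‖ * (k:ℝ) ^ p, fun n hn => ?_⟩
  have hnp : (0:ℝ) < (n:ℝ) ^ p := by
    have : (0:ℝ) < n := by exact_mod_cast hn
    positivity
  rw [← div_eq_mul_inv, le_div_iff₀ hnp]
  have hterm : ∀ k ∈ Finset.range (N' + 1), 0 ≤ ‖gterm a b c k‖ * (k:ℝ) ^ p := by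
    intro k _
    positivity
  by_cases hcase : n ≤ N'
  · exact Finset.single_le_sum hterm (Finset.mem_range.mpr (Nat.lt_succ_of_le hcase))
  · refine le_trans (hdec n (le_of_not_ge hcase)) ?_ -- fix
    exact Finset.single_le_sum hterm (Finset.mem_range.mpr (Nat.lt_succ_self N'))


lemma gterm_norm_summable (a b c : ℂ) (hc : ∀ j : ℕ, c + (j:ℂ) ≠ 0)
    (h : 0 < (c - a - b).re) : Summable (fun n => ‖gterm a b c n‖) := by
  set p : ℝ := 1 + (c - a - b).re / 2 with hp
  have hp1 : 1 < p := by simp only [hp]; linarith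
  have hplt : p < 1 + (c - a - b).re := by simp only [hp]; linarith
  obtain ⟨C, hC⟩ := gterm_bound a b c p hc hplt
  rw [← summable_nat_add_iff 1]
  have hs : Summable (fun n : ℕ => C * (((n + 1 : ℕ) : ℝ) ^ p)⁻¹) := by
    apply Summable.mul_left
    exact ((summable_nat_add_iff 1).2 (Real.summable_nat_rpow_inv.2 hp1))
  refine Summable.of_nonneg_of_le (fun n => norm_nonneg _) (fun n => ?_) hs
  exact hC (n + 1) (Nat.le_add_left 1 n)

lemma gterm_summable (a b c : ℂ) (hc : ∀ j : ℕ, c + (j:ℂ) ≠ 0)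
    (h : 0 < (c - a - b).re) : Summable (gterm a b c) :=
  (gterm_norm_summable a b c hc h).of_norm

lemma tendsto_gfun (a b c : ℂ) (hc : ∀ j : ℕ, (c + 1) + (j:ℂ) ≠ 0)
    (h : 0 < (c - a - b).re) :
    Tendsto (fun n : ℕ => (n : ℂ) * (c + n) * gterm a b (c + 1) n) atTop (𝓝 0) := by
  set p : ℝ := 2 + (c - a - b).re / 2 with hp
  have h' : 0 < c.re - a.re - b.re := by simpa [Complex.sub_re] using h
  have hplt : p < 1 + ((c + 1) - a - b).re := by
    simp only [hp, Complex.sub_re, Complex.add_re, Complex.one_re]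
    linarith
  obtain ⟨C, hC⟩ := gterm_bound a b (c + 1) p hc hplt
  rw [tendsto_zero_iff_norm_tendsto_zero]
  apply squeeze_zero' (.of_forall fun n => norm_nonneg _)
    (g := fun n : ℕ => (1 + ‖c‖) * C * ((n:ℝ) ^ ((c - a - b).re / 2))⁻¹)
  · filter_upwards [eventually_ge_atTop 1] with n hn
    have hn0 : (0:ℝ) < n := by exact_mod_cast hn
    have h1 : ‖(n : ℂ) * (c + n) * gterm a b (c + 1) n‖
        = (n:ℝ) * ‖c + (n:ℂ)‖ * ‖gterm a b (c + 1) n‖ := by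
      rw [norm_mul, norm_mul, Complex.norm_natCast]
    rw [h1]
    have h2 : ‖c + (n:ℂ)‖ ≤ ‖c‖ + n := by
      calc ‖c + (n:ℂ)‖ ≤ ‖c‖ + ‖(n:ℂ)‖ := norm_add_le _ _
      _ = ‖c‖ + n := by rw [Complex.norm_natCast]
    have h3 : ‖gterm a b (c + 1) n‖ ≤ C * ((n:ℝ) ^ p)⁻¹ := hC n hn
    have hCpos : 0 ≤ C * ((n:ℝ) ^ p)⁻¹ := le_trans (norm_nonneg _) h3
    have hn1 : (1:ℝ) ≤ n := by exact_mod_cast hn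
    have hc' : ‖c + (n:ℂ)‖ ≤ (1 + ‖c‖) * n := by nlinarith [norm_nonneg c]
    calc (n:ℝ) * ‖c + (n:ℂ)‖ * ‖gterm a b (c + 1) n‖
        ≤ (n:ℝ) * ((1 + ‖c‖) * n) * (C * ((n:ℝ) ^ p)⁻¹) := by
          apply mul_le_mul (mul_le_mul_of_nonneg_left hc' (by positivity)) h3
            (norm_nonneg _) (by positivity)
      _ = (1 + ‖c‖) * C * ((n:ℝ) ^ 2 * ((n:ℝ) ^ p)⁻¹) := by
          rw [sq]; ring
      _ = (1 + ‖c‖) * C * ((n:ℝ) ^ ((c - a - b).re / 2))⁻¹ := by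
          congr 1
          rw [show ((n:ℝ) ^ 2) = (n:ℝ) ^ (2:ℝ) from (Real.rpow_two _).symm ▸ rfl]
          rw [← Real.rpow_neg hn0.le, ← Real.rpow_add hn0, ← Real.rpow_neg hn0.le]
          congr 1
          simp only [hp]
          ring
  · rw [show (0:ℝ) = (1 + ‖c‖) * C * 0 from (mul_zero _).symm]
    apply Tendsto.mul tendsto_const_nhds
    have : Tendsto (fun x : ℝ => (x ^ ((c - a - b).re / 2))⁻¹) atTop (𝓝 0) := by
      have := tendsto_rpow_neg_atTop (y := (c - a - b).re / 2) (by linarith)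
      refine this.congr' ?_
      filter_upwards [eventually_gt_atTop 0] with x hx
      rw [Real.rpow_neg hx.le]
    exact this.comp tendsto_natCast_atTop_atTop


lemma norm_add_nat_mono {z : ℂ} (hz : 0 ≤ z.re) {k l : ℕ} (hkl : k ≤ l) :
    ‖z + (k:ℂ)‖ ≤ ‖z + (l:ℂ)‖ := by
  have hk : (k:ℝ) ≤ (l:ℝ) := by exact_mod_cast hkl
  have h0 : (0:ℝ) ≤ k := by positivity
  rw [Complex.norm_def, Complex.norm_def,
    Complex.normSq_apply, Complex.normSq_apply]
  apply Real.sqrt_le_sqrt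
  simp only [Complex.add_re, Complex.add_im, Complex.natCast_re, Complex.natCast_im]
  nlinarith

lemma tendsto_inv_shift (w : ℂ) : Tendsto (fun m : ℕ => (w + (m:ℂ))⁻¹) atTop (𝓝 0) := by
  rw [tendsto_zero_iff_norm_tendsto_zero]
  simp only [norm_inv]
  apply Tendsto.inv_tendsto_atTop
  refine tendsto_atTop_mono' atTop ?_
    (tendsto_atTop_add_const_right _ (-‖w‖) tendsto_natCast_atTop_atTop)
  filter_upwards with m
  have h := norm_sub_le (w + (m:ℂ)) w
  rw [add_sub_cancel_left, Complex.norm_natCast] at h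
  show (m:ℝ) - ‖w‖ ≤ ‖w + (m:ℂ)‖
  linarith


lemma S_tendsto_one (a b c : ℂ) :
    Tendsto (fun m : ℕ => ∑' n, gterm a b (c + m) n) atTop (𝓝 1) := by
  obtain ⟨M, hM⟩ := exists_nat_gt (max (-c.re) ((a + b - c).re))
  have hM1 : -c.re < M := lt_of_le_of_lt (le_max_left _ _) hM
  have hM2 : ((a + b - c).re) < M := lt_of_le_of_lt (le_max_right _ _) hM
  have hcM : ∀ j : ℕ, (c + M) + (j:ℂ) ≠ 0 := by
    intro j hj
    have h0 : ((c + M) + j).re = 0 := by rw [hj]; simp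
    simp only [Complex.add_re, Complex.natCast_re] at h0
    have hj0 : (0:ℝ) ≤ j := by positivity
    linarith
  have hreM : 0 < ((c + M) - a - b).re := by
    simp only [Complex.sub_re, Complex.add_re, Complex.natCast_re]
    simp only [Complex.sub_re, Complex.add_re] at hM2
    linarith
  have hbound := gterm_norm_summable a b (c + M) hcM hreM
  have key := tendsto_tsum_of_dominated_convergence (𝓕 := (atTop : Filter ℕ))
    (f := fun (m : ℕ) (n : ℕ) => gterm a b (c + m) n)
    (g := fun n => if n = 0 then (1:ℂ) else 0)
    (bound := fun n => ‖gterm a b (c + M) n‖) hbound ?_ ?_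
  · have h1 : (∑' n : ℕ, if n = 0 then (1:ℂ) else 0) = 1 := tsum_ite_eq 0 1
    rwa [h1] at key
  · -- pointwise limits
    intro n
    rcases Nat.eq_zero_or_pos n with rfl | hn
    · simp only [if_pos rfl]
      refine Tendsto.congr (fun m => ?_) tendsto_const_nhds
      simp [gterm]
    · simp only [if_neg (Nat.pos_iff_ne_zero.mp hn)]
      have hrw : ∀ m : ℕ, gterm a b (c + m) n =
          ((∏ i ∈ Finset.range n, (a + (i:ℂ))) * (∏ i ∈ Finset.range n, (b + (i:ℂ)))
            / (n ! : ℂ)) * ∏ i ∈ Finset.range n, ((c + (i:ℂ)) + (m:ℂ))⁻¹ := by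
        intro m
        rw [gterm, show (∏ i ∈ Finset.range n, ((c + (i:ℂ)) + (m:ℂ))⁻¹)
            = ∏ i ∈ Finset.range n, ((c + (m:ℂ)) + (i:ℂ))⁻¹ from
            Finset.prod_congr rfl fun i _ => by ring_nf,
          Finset.prod_inv_distrib, ← div_eq_mul_inv, div_div]
      simp_rw [hrw]
      have hzero : ((∏ i ∈ Finset.range n, (a + (i:ℂ))) * (∏ i ∈ Finset.range n, (b + (i:ℂ)))
            / (n ! : ℂ)) * ∏ i ∈ Finset.range n, (0:ℂ) = 0 := by
        rw [Finset.prod_const, Finset.card_range, zero_pow (Nat.pos_iff_ne_zero.mp hn), mul_zero]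
      rw [← hzero]
      apply Tendsto.mul tendsto_const_nhds
      exact tendsto_finset_prod _ (fun i _ => tendsto_inv_shift (c + (i:ℂ)))
  · -- domination
    filter_upwards [eventually_ge_atTop M] with m hm
    intro n
    induction n with
    | zero => simp [gterm]
    | succ n ih =>
      rw [norm_gterm_succ, norm_gterm_succ]
      have hle : ‖(c + M) + (n:ℂ)‖ ≤ ‖(c + m) + (n:ℂ)‖ := by
        have hz : (0:ℝ) ≤ ((c + M) + (n:ℂ)).re := by
          simp only [Complex.add_re, Complex.natCast_re]
          have : (0:ℝ) ≤ n := by positivity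
          linarith
        have hmono := norm_add_nat_mono (z := (c + M) + (n:ℂ)) hz (Nat.zero_le (m - M))
        have e1 : ((c + M) + (n:ℂ)) + ((0:ℕ):ℂ) = (c + M) + (n:ℂ) := by simp
        have e2 : ((c + M) + (n:ℂ)) + (((m - M : ℕ)):ℂ) = (c + m) + (n:ℂ) := by
          rw [Nat.cast_sub hm]
          push_cast
          ring
        rwa [e1, e2] at hmono
      have hpos : (0:ℝ) < ‖(c + M) + (n:ℂ)‖ := norm_pos_iff.mpr (hcM n)
      gcongr

lemma hc_succ {c : ℂ} (hc : ∀ j : ℕ, c + (j:ℂ) ≠ 0) : ∀ j : ℕ, (c + 1) + (j:ℂ) ≠ 0 := by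
  intro j
  have := hc (j + 1)
  push_cast at this ⊢
  intro hcon
  apply this
  rw [← hcon]; ring

lemma cab_ne_zero {a b c : ℂ} (h : 0 < (c - a - b).re) : c - a - b ≠ 0 := by
  intro hcon
  rw [hcon] at h
  simp at h

/-- the contiguous relation -/
lemma gauss_FE (a b c : ℂ) (hc : ∀ j : ℕ, c + (j:ℂ) ≠ 0) (h : 0 < (c - a - b).re) :
    ∑' n, gterm a b c n
      = (c - a) * (c - b) / (c * (c - a - b)) * ∑' n, gterm a b (c + 1) n := by
  have hc1 : ∀ j : ℕ, (c + 1) + (j:ℂ) ≠ 0 := hc_succ hc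
  have h1 : 0 < ((c + 1) - a - b).re := by
    simp only [Complex.sub_re, Complex.add_re, Complex.one_re]
    simp only [Complex.sub_re] at h
    linarith
  have s1 : Summable (gterm a b c) := gterm_summable a b c hc h
  have s2 : Summable (gterm a b (c + 1)) := gterm_summable a b (c + 1) hc1 h1
  set g : ℕ → ℂ := fun n => (n : ℂ) * (c + n) * gterm a b (c + 1) n with hg
  -- key identity
  have key : ∀ n : ℕ, c * (c - a - b) * gterm a b c n - (c - a) * (c - b) * gterm a b (c + 1) n
      = g n - g (n + 1) := by
    intro n
    have hPc : (∏ i ∈ Finset.range n, (c + (i:ℂ))) ≠ 0 := by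
      rw [Finset.prod_ne_zero_iff]; exact fun i _ => hc i
    have hPc1 : (∏ i ∈ Finset.range n, ((c + 1) + (i:ℂ))) ≠ 0 := by
      rw [Finset.prod_ne_zero_iff]; exact fun i _ => hc1 i
    have hfact : ((n ! : ℂ)) ≠ 0 := by exact_mod_cast Nat.factorial_ne_zero n
    have hshift : (∏ i ∈ Finset.range n, (c + (i:ℂ))) * (c + n)
        = c * ∏ i ∈ Finset.range n, ((c + 1) + (i:ℂ)) := by
      rw [← Finset.prod_range_succ (fun i => c + (i:ℂ)) n, Finset.prod_range_succ']
      push_cast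
      rw [add_zero, mul_comm]
      congr 1
      exact Finset.prod_congr rfl fun i _ => by ring
    have hi : c * gterm a b c n = (c + n) * gterm a b (c + 1) n := by
      rw [gterm, gterm, mul_div_assoc', mul_div_assoc',
        div_eq_div_iff (mul_ne_zero hfact hPc) (mul_ne_zero hfact hPc1)]
      linear_combination (-((n ! : ℂ) * ((∏ i ∈ Finset.range n, (a + (i:ℂ)))
        * ∏ i ∈ Finset.range n, (b + (i:ℂ))))) * hshift
    have hii : g (n + 1) = (a + n) * (b + n) * gterm a b (c + 1) n := by
      rw [hg]
      simp only []
      rw [gterm_succ]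
      have hn1 : ((n:ℂ) + 1) ≠ 0 := by exact_mod_cast Nat.succ_ne_zero n
      have hcn1 : ((n:ℂ) + 1) * ((c + 1) + n) ≠ 0 := mul_ne_zero hn1 (hc1 n)
      have hc1n := hc1 n
      push_cast
      field_simp
      ring
    rw [hg]
    simp only []
    linear_combination (c - a - b) * hi + hii
  have s1' := s1.mul_left (c * (c - a - b))
  have s2' := s2.mul_left ((c - a) * (c - b))
  have hsum_diff : Summable (fun n => c * (c - a - b) * gterm a b c n
      - (c - a) * (c - b) * gterm a b (c + 1) n) := s1'.sub s2'
  have htsum : (∑' n, (c * (c - a - b) * gterm a b c n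
        - (c - a) * (c - b) * gterm a b (c + 1) n))
      = c * (c - a - b) * ∑' n, gterm a b c n
        - (c - a) * (c - b) * ∑' n, gterm a b (c + 1) n := by
    rw [Summable.tsum_sub s1' s2', tsum_mul_left, tsum_mul_left]
  have hps : Tendsto (fun N => ∑ n ∈ Finset.range N, (c * (c - a - b) * gterm a b c n
      - (c - a) * (c - b) * gterm a b (c + 1) n)) atTop (𝓝 0) := by
    have heq : ∀ N, ∑ n ∈ Finset.range N, (c * (c - a - b) * gterm a b c n
        - (c - a) * (c - b) * gterm a b (c + 1) n) = g 0 - g N := by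
      intro N
      rw [Finset.sum_congr rfl (fun n _ => key n)]
      exact Finset.sum_range_sub' g N
    have hg0 : g 0 = 0 := by simp [hg]
    have := (tendsto_gfun a b c hc1 h).neg
    rw [neg_zero] at this
    refine Tendsto.congr (fun N => ?_) this
    rw [heq N, hg0, zero_sub, hg]
  have h0 : (∑' n, (c * (c - a - b) * gterm a b c n
      - (c - a) * (c - b) * gterm a b (c + 1) n)) = 0 :=
    tendsto_nhds_unique (hsum_diff.hasSum.tendsto_sum_nat) hps
  rw [htsum] at h0
  have hc0 : c ≠ 0 := by
    have := hc 0
    simpa using this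
  have hcab : c - a - b ≠ 0 := cab_ne_zero h
  rw [div_mul_eq_mul_div, eq_div_iff (mul_ne_zero hc0 hcab)]
  linear_combination h0

lemma gauss_iterate (a b c : ℂ) (hc : ∀ j : ℕ, c + (j:ℂ) ≠ 0) (h : 0 < (c - a - b).re) :
    ∀ m : ℕ, ∑' n, gterm a b c n
      = (∏ j ∈ Finset.range m, ((c - a + j) * (c - b + j) / ((c + j) * (c - a - b + j))))
        * ∑' n, gterm a b (c + m) n := by
  intro m
  induction m with
  | zero => simp
  | succ m ih =>
    have hcm : ∀ j : ℕ, (c + m) + (j:ℂ) ≠ 0 := by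
      intro j
      have h2 := hc (m + j)
      push_cast at h2 ⊢
      intro hcon
      apply h2
      rw [← hcon]; ring
    have hm : 0 < ((c + m) - a - b).re := by
      simp only [Complex.sub_re, Complex.add_re, Complex.natCast_re]
      simp only [Complex.sub_re] at h
      have : (0:ℝ) ≤ m := by positivity
      linarith
    rw [ih, gauss_FE a b (c + m) hcm hm, Finset.prod_range_succ,
      show c + (m:ℂ) + 1 = c + ((m + 1 : ℕ):ℂ) by push_cast; ring]
    ring

lemma R_tendsto (a b c : ℂ) (hc : ∀ j : ℕ, c + (j:ℂ) ≠ 0) (h : 0 < (c - a - b).re)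
    (hca : ∀ j : ℕ, c - a + (j:ℂ) ≠ 0) (hcb : ∀ j : ℕ, c - b + (j:ℂ) ≠ 0) :
    Tendsto (fun m : ℕ => ∏ j ∈ Finset.range m,
        ((c - a + j) * (c - b + j) / ((c + j) * (c - a - b + j)))) atTop
      (𝓝 (Complex.Gamma (c - a - b) * Complex.Gamma c
        / (Complex.Gamma (c - a) * Complex.Gamma (c - b)))) := by
  have hcab : ∀ j : ℕ, c - a - b + (j:ℂ) ≠ 0 := by
    intro j hcon
    have h2 := congrArg Complex.re hcon
    simp only [Complex.add_re, Complex.natCast_re, Complex.zero_re] at h2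
    have : (0:ℝ) ≤ j := by positivity
    linarith
  have hident : ∀ k : ℕ, (∏ j ∈ Finset.range (k + 2),
        ((c - a + j) * (c - b + j) / ((c + j) * (c - a - b + j))))
      = (Complex.GammaSeq c (k + 1) * Complex.GammaSeq (c - a - b) (k + 1))
        / (Complex.GammaSeq (c - a) (k + 1) * Complex.GammaSeq (c - b) (k + 1)) := by
    intro k
    have hPc : (∏ j ∈ Finset.range (k + 2), (c + (j:ℂ))) ≠ 0 :=
      Finset.prod_ne_zero_iff.mpr fun j _ => hc j
    have hPca : (∏ j ∈ Finset.range (k + 2), (c - a + (j:ℂ))) ≠ 0 :=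
      Finset.prod_ne_zero_iff.mpr fun j _ => hca j
    have hPcb : (∏ j ∈ Finset.range (k + 2), (c - b + (j:ℂ))) ≠ 0 :=
      Finset.prod_ne_zero_iff.mpr fun j _ => hcb j
    have hPcab : (∏ j ∈ Finset.range (k + 2), (c - a - b + (j:ℂ))) ≠ 0 :=
      Finset.prod_ne_zero_iff.mpr fun j _ => hcab j
    have hN0 : ((k + 1 : ℕ) : ℂ) ≠ 0 := by exact_mod_cast Nat.succ_ne_zero k
    have hF0 : (((k + 1)! : ℕ) : ℂ) ≠ 0 := by exact_mod_cast Nat.factorial_ne_zero (k + 1)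
    have hNc : ((k + 1 : ℕ) : ℂ) ^ c ≠ 0 := fun hz =>
      hN0 ((Complex.cpow_eq_zero_iff _ _).1 hz).1
    have hNca : ((k + 1 : ℕ) : ℂ) ^ (c - a) ≠ 0 := fun hz =>
      hN0 ((Complex.cpow_eq_zero_iff _ _).1 hz).1
    have hNcb : ((k + 1 : ℕ) : ℂ) ^ (c - b) ≠ 0 := fun hz =>
      hN0 ((Complex.cpow_eq_zero_iff _ _).1 hz).1
    have hNcab : ((k + 1 : ℕ) : ℂ) ^ (c - a - b) ≠ 0 := fun hz =>
      hN0 ((Complex.cpow_eq_zero_iff _ _).1 hz).1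
    have hN0' : ((k : ℂ) + 1) ≠ 0 := by exact_mod_cast Nat.succ_ne_zero k
    have hNN : ((k : ℂ) + 1) ^ c * ((k : ℂ) + 1) ^ (c - a - b)
        = ((k : ℂ) + 1) ^ (c - a) * ((k : ℂ) + 1) ^ (c - b) := by
      rw [← Complex.cpow_add _ _ hN0', ← Complex.cpow_add _ _ hN0']
      congr 1
      ring
    have hprod : (∏ j ∈ Finset.range (k + 2),
          ((c - a + j) * (c - b + j) / ((c + j) * (c - a - b + j))))
        = ((∏ j ∈ Finset.range (k + 2), (c - a + (j:ℂ)))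
            * ∏ j ∈ Finset.range (k + 2), (c - b + (j:ℂ)))
          / ((∏ j ∈ Finset.range (k + 2), (c + (j:ℂ)))
            * ∏ j ∈ Finset.range (k + 2), (c - a - b + (j:ℂ))) := by
      rw [Finset.prod_div_distrib, Finset.prod_mul_distrib, Finset.prod_mul_distrib]
    rw [hprod, Complex.GammaSeq, Complex.GammaSeq, Complex.GammaSeq, Complex.GammaSeq]
    rw [div_eq_div_iff (mul_ne_zero hPc hPcab) ?_]
    · field_simp
      simp only [Nat.cast_add, Nat.cast_one]
      linear_combination (-1 : ℂ) * hNN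
    · exact mul_ne_zero (div_ne_zero (mul_ne_zero hNca hF0) hPca)
        (div_ne_zero (mul_ne_zero hNcb hF0) hPcb)
  have hgne : Complex.Gamma (c - a) * Complex.Gamma (c - b) ≠ 0 := by
    apply mul_ne_zero
    · apply Complex.Gamma_ne_zero
      intro m hm
      exact hca m (by rw [hm]; ring)
    · apply Complex.Gamma_ne_zero
      intro m hm
      exact hcb m (by rw [hm]; ring)
  have hlim : Tendsto (fun k : ℕ =>
      (Complex.GammaSeq c (k + 1) * Complex.GammaSeq (c - a - b) (k + 1))
        / (Complex.GammaSeq (c - a) (k + 1) * Complex.GammaSeq (c - b) (k + 1))) atTop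
      (𝓝 (Complex.Gamma (c - a - b) * Complex.Gamma c
        / (Complex.Gamma (c - a) * Complex.Gamma (c - b)))) := by
    rw [show Complex.Gamma (c - a - b) * Complex.Gamma c
        = Complex.Gamma c * Complex.Gamma (c - a - b) from mul_comm _ _]
    refine Tendsto.div (Tendsto.mul ?_ ?_) (Tendsto.mul ?_ ?_) hgne <;>
      exact (Complex.GammaSeq_tendsto_Gamma _).comp (tendsto_add_atTop_nat 1)
  rw [← tendsto_add_atTop_iff_nat 2]
  exact hlim.congr (fun k => (hident k).symm)

lemma gauss_main (a b c : ℂ) (hc : ∀ j : ℕ, c + (j:ℂ) ≠ 0) (h : 0 < (c - a - b).re) :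
    ∑' n, gterm a b c n = Complex.Gamma (c - a - b) * Complex.Gamma c
      / (Complex.Gamma (c - a) * Complex.Gamma (c - b)) := by
  by_cases hdeg : (∃ j : ℕ, c - a + (j:ℂ) = 0) ∨ (∃ j : ℕ, c - b + (j:ℂ) = 0)
  · have hS0 : ∑' n, gterm a b c n = 0 := by
      obtain (⟨j, hj⟩ | ⟨j, hj⟩) := hdeg <;>
      · rw [gauss_iterate a b c hc h (j + 1),
          Finset.prod_eq_zero (Finset.self_mem_range_succ j) (by rw [hj]; simp), zero_mul]
    have hG0 : Complex.Gamma (c - a) * Complex.Gamma (c - b) = 0 := by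
      obtain (⟨j, hj⟩ | ⟨j, hj⟩) := hdeg
      · have he : c - a = -(j:ℂ) := by linear_combination hj
        rw [he, Complex.Gamma_neg_nat_eq_zero, zero_mul]
      · have he : c - b = -(j:ℂ) := by linear_combination hj
        rw [he, Complex.Gamma_neg_nat_eq_zero, mul_zero]
    rw [hS0, hG0, div_zero]
  · push_neg at hdeg
    obtain ⟨hca, hcb⟩ := hdeg
    have h1 := (R_tendsto a b c hc h hca hcb).mul (S_tendsto_one a b c)
    rw [mul_one] at h1
    have h2 : Tendsto (fun m : ℕ =>
        (∏ j ∈ Finset.range m, ((c - a + j) * (c - b + j) / ((c + j) * (c - a - b + j))))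
          * ∑' n, gterm a b (c + m) n) atTop (𝓝 (∑' n, gterm a b c n)) :=
      tendsto_const_nhds.congr (fun m => gauss_iterate a b c hc h m)
    exact tendsto_nhds_unique h2 h1

/-- Gauss's summation theorem with parameters `α/2`, `β/2`, `(γ+1)/2`:
if `Re(γ+1-α-β) > 0` and `γ` is not a nonpositive integer then
`Σ (α/2)_n (β/2)_n / (n! ((γ+1)/2)_n) = Γ((γ+1-α-β)/2)Γ((γ+1)/2)/(Γ((γ+1-α)/2)Γ((γ+1-β)/2))`. -/
theorem stmt8 (α β γ : ℂ) (hγ : ∀ m : ℕ, γ ≠ -(m : ℂ))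
    (h : 0 < (γ + 1 - α - β).re) :
    ∑' n : ℕ,
        (∏ i ∈ Finset.range n, (α / 2 + (i : ℂ))) * (∏ i ∈ Finset.range n, (β / 2 + (i : ℂ))) /
          ((n ! : ℂ) * ∏ i ∈ Finset.range n, ((γ + 1) / 2 + (i : ℂ)))
      = Complex.Gamma ((γ + 1 - α - β) / 2) * Complex.Gamma ((γ + 1) / 2) /
          (Complex.Gamma ((γ + 1 - α) / 2) * Complex.Gamma ((γ + 1 - β) / 2)) := by
  have hc : ∀ j : ℕ, (γ + 1) / 2 + (j:ℂ) ≠ 0 := by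
    intro j hj
    apply hγ (2 * j + 1)
    push_cast
    linear_combination 2 * hj
  have hre : 0 < ((γ + 1) / 2 - α / 2 - β / 2).re := by
    have he : (γ + 1) / 2 - α / 2 - β / 2 = (γ + 1 - α - β) / 2 := by ring
    rw [he, Complex.div_re]
    simp only [Complex.sub_re, Complex.add_re, Complex.one_re] at h
    norm_num
    linarith
  have hmain := gauss_main (α/2) (β/2) ((γ+1)/2) hc hre
  rw [show (γ + 1) / 2 - α / 2 - β / 2 = (γ + 1 - α - β) / 2 by ring,
     show (γ + 1) / 2 - α / 2 = (γ + 1 - α) / 2 by ring,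
     show (γ + 1) / 2 - β / 2 = (γ + 1 - β) / 2 by ring] at hmain
  exact hmain
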